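/- Let G be the concurrent-move game tree associated with a Knapsack instance (w_1,…,w_N; v_1,…,v_N; W) with positive integer weights and values. For every leader behavioral strategy σ1 in G there exists a leader behavioral strategy σ1' that plays a pure action (⊕ or ⊖ with probability 1) in every subgame I_i, such that the leader's Stackelberg payoff of σ1' (the leader's expected utility under a follower best response to σ1' with ties broken in favor of the leader) is at least the leader's Stackelberg payoff of σ1. -/
import Mathlib


open scoped BigOperators

noncomputable section

namespace KnapsackGame

/-- A behavioral strategy of the leader in the concurrent-move game tree associated with a
Knapsack instance with `N` items: `q i` is the probability of root action `l_i`, and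
`r i` is the probability of action `⊕` in the subgame `I_i`. -/
structure LStrat (N : ℕ) where
  q : Fin N → ℝ
  r : Fin N → ℝ

/-- A behavioral strategy of the follower: `g 0` is the probability of root action `f_0`,
`g k.succ` the probability of `f_{k+1}`, and `s i` the probability of `L` in subgame `I_i`. -/
structure FStrat (N : ℕ) where
  g : Fin (N + 1) → ℝ
  s : Fin N → ℝ

/-- Validity of a leader behavioral strategy. -/
def LValid {N : ℕ} (σ : LStrat N) : Prop :=
  (∀ i, 0 ≤ σ.q i) ∧ (∑ i, σ.q i) = 1 ∧ ∀ i, 0 ≤ σ.r i ∧ σ.r i ≤ 1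

/-- Validity of a follower behavioral strategy. -/
def FValid {N : ℕ} (τ : FStrat N) : Prop :=
  (∀ k, 0 ≤ τ.g k) ∧ (∑ k, τ.g k) = 1 ∧ ∀ i, 0 ≤ τ.s i ∧ τ.s i ≤ 1

/-- The leader's expected utility in the subgame `I_i`:
`(⊕,L) ↦ N·v i`, `(⊕,R) ↦ 0`, `(⊖,L) ↦ N·v i`, `(⊖,R) ↦ 0`. -/
def subEU1 (N : ℕ) (v : Fin N → ℕ) (σ : LStrat N) (τ : FStrat N) (i : Fin N) : ℝ :=
  σ.r i * (τ.s i * ((N : ℝ) * (v i : ℝ)) + (1 - τ.s i) * 0) +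
    (1 - σ.r i) * (τ.s i * ((N : ℝ) * (v i : ℝ)) + (1 - τ.s i) * 0)

/-- The follower's expected utility in the subgame `I_i`:
`(⊕,L) ↦ -N·w i`, `(⊕,R) ↦ -N·w i`, `(⊖,L) ↦ -N·w i`, `(⊖,R) ↦ 0`. -/
def subEU2 (N : ℕ) (w : Fin N → ℕ) (σ : LStrat N) (τ : FStrat N) (i : Fin N) : ℝ :=
  σ.r i * (τ.s i * (-((N : ℝ) * (w i : ℝ))) + (1 - τ.s i) * (-((N : ℝ) * (w i : ℝ)))) +
    (1 - σ.r i) * (τ.s i * (-((N : ℝ) * (w i : ℝ))) + (1 - τ.s i) * 0)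

/-- The leader's expected utility in the whole game: terminal payoffs after `f_k`, `k ≥ 1`,
give the leader `0`. -/
def EU1 (N : ℕ) (v : Fin N → ℕ) (σ : LStrat N) (τ : FStrat N) : ℝ :=
  τ.g 0 * (∑ i, σ.q i * subEU1 N v σ τ i) +
    ∑ k : Fin N, τ.g k.succ * (∑ i, σ.q i * (0 : ℝ))

/-- The follower's expected utility in the whole game: after root actions `(l_i, f_{k+1})`
the follower gets `N·M − W − M` if `i = k` and `−W − M` otherwise. -/
def EU2 (N : ℕ) (w : Fin N → ℕ) (W M : ℕ) (σ : LStrat N) (τ : FStrat N) : ℝ :=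
  τ.g 0 * (∑ i, σ.q i * subEU2 N w σ τ i) +
    ∑ k : Fin N, τ.g k.succ *
      (∑ i, σ.q i *
        (if i = k then (N : ℝ) * (M : ℝ) - (W : ℝ) - (M : ℝ) else -(W : ℝ) - (M : ℝ)))

/-- `τ` is a best response of the follower to the leader strategy `σ`. -/
def BestResponse (N : ℕ) (w : Fin N → ℕ) (W M : ℕ) (σ : LStrat N) (τ : FStrat N) : Prop :=
  FValid τ ∧ ∀ τ' : FStrat N, FValid τ' → EU2 N w W M σ τ' ≤ EU2 N w W M σ τ

lemma EU1_eq (N : ℕ) (v : Fin N → ℕ) (σ : LStrat N) (τ : FStrat N) :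
    EU1 N v σ τ = τ.g 0 * ∑ i, σ.q i * (τ.s i * ((N : ℝ) * (v i : ℝ))) := by
  unfold EU1 subEU1
  simp only [mul_zero, Finset.sum_const_zero, add_zero]
  congr 1
  exact Finset.sum_congr rfl fun i _ => by ring

lemma EU2_eq (N : ℕ) (w : Fin N → ℕ) (W M : ℕ) (σ : LStrat N) (τ : FStrat N) :
    EU2 N w W M σ τ =
      τ.g 0 * (∑ i, σ.q i *
          (-((N : ℝ) * (w i : ℝ)) * (σ.r i + (1 - σ.r i) * τ.s i))) +
      ∑ k : Fin N, τ.g k.succ *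
        (∑ i, σ.q i *
          (if i = k then (N : ℝ) * (M : ℝ) - (W : ℝ) - (M : ℝ) else -(W : ℝ) - (M : ℝ))) := by
  unfold EU2 subEU2
  congr 1
  congr 1
  exact Finset.sum_congr rfl fun i _ => by ring

/-- In the concurrent-move game tree associated with a Knapsack instance,
for every (valid) leader behavioral strategy `σ` there is a leader behavioral strategy `σ'`
that plays a pure action (`⊕` or `⊖` with probability 1) in every subgame `I_i` whose
Stackelberg payoff (the leader's expected utility under a follower best response with ties
broken in favor of the leader) is at least that of `σ`. -/
theorem wlog_pure_in_subgames
    (N W M : ℕ) (hN : 0 < N) (w v : Fin N → ℕ)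
    (hw : ∀ i, 0 < w i) (hv : ∀ i, 0 < v i)
    (hM : IsLeast {m : ℕ | ∀ i, W * N * v i < m ∧ N * w i < m} M)
    (σ : LStrat N) (hσ : LValid σ) :
    ∃ σ' : LStrat N, LValid σ' ∧ (∀ i, σ'.r i = 0 ∨ σ'.r i = 1) ∧
      ∀ x x' : ℝ,
        IsGreatest {y : ℝ | ∃ τ : FStrat N, BestResponse N w W M σ τ ∧ y = EU1 N v σ τ} x →
        IsGreatest {y : ℝ | ∃ τ : FStrat N, BestResponse N w W M σ' τ ∧ y = EU1 N v σ' τ} x' →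
        x ≤ x' := by
  classical
  obtain ⟨hq0, hq1, hrb⟩ := hσ
  set σ' : LStrat N := ⟨σ.q, fun i => if σ.r i = 1 then 1 else 0⟩ with hσ'def
  have hσ'q : σ'.q = σ.q := rfl
  have hσ'r : ∀ i, σ'.r i = if σ.r i = 1 then 1 else 0 := fun i => rfl
  refine ⟨σ', ⟨hq0, hq1, fun i => by rw [hσ'r]; split <;> norm_num⟩,
    fun i => by rw [hσ'r]; split <;> simp, ?_⟩
  intro x x' hx hx'
  obtain ⟨τ, ⟨⟨hg0, hg1, hsb⟩, hτBR⟩, hxeq⟩ := hx.1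
  -- x' is nonnegative
  obtain ⟨τ2, ⟨hτ2v, _⟩, hx'eq⟩ := hx'.1
  have hx'nonneg : 0 ≤ x' := by
    rw [hx'eq, EU1_eq]
    refine mul_nonneg (hτ2v.1 0) (Finset.sum_nonneg fun i _ => mul_nonneg (hq0 i)
      (mul_nonneg (hτ2v.2.2 i).1 (by positivity)))
  rcases eq_or_lt_of_le (hg0 0) with hg00 | hg00
  · -- follower never enters the subgames: x = 0
    have hx0 : x = 0 := by rw [hxeq, EU1_eq, ← hg00, zero_mul]
    linarith
  -- main case : τ.g 0 > 0
  have hNw : ∀ i, (0 : ℝ) < (N : ℝ) * (w i : ℝ) :=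
    fun i => mul_pos (by exact_mod_cast hN) (by exact_mod_cast hw i)
  -- Step A: where r i < 1, best response forces q i * s i = 0
  have hs0 : ∀ i, σ.r i ≠ 1 → σ.q i * τ.s i = 0 := by
    intro i hi
    by_contra hne
    have hqi : 0 < σ.q i := lt_of_le_of_ne (hq0 i) fun h => hne (by rw [← h, zero_mul])
    have hsi : 0 < τ.s i := lt_of_le_of_ne (hsb i).1 fun h => hne (by rw [← h, mul_zero])
    have hri : σ.r i < 1 := lt_of_le_of_ne (hrb i).2 hi
    set τ3 : FStrat N := ⟨τ.g, Function.update τ.s i 0⟩ with hτ3def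
    have hτ3v : FValid τ3 := by
      refine ⟨hg0, hg1, fun j => ?_⟩
      by_cases hj : j = i
      · subst hj; simp [τ3]
      · simpa [τ3, Function.update_of_ne hj] using hsb j
    have hle := hτBR τ3 hτ3v
    rw [EU2_eq, EU2_eq] at hle
    have key : ∀ t : Fin N → ℝ,
        ∑ j, σ.q j * (-((N : ℝ) * (w j : ℝ)) * (σ.r j + (1 - σ.r j) * t j)) =
        σ.q i * (-((N : ℝ) * (w i : ℝ)) * (σ.r i + (1 - σ.r i) * t i)) +
        ∑ j ∈ Finset.univ.erase i,
          σ.q j * (-((N : ℝ) * (w j : ℝ)) * (σ.r j + (1 - σ.r j) * t j)) :=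
      fun t => (Finset.add_sum_erase _ _ (Finset.mem_univ i)).symm
    have hτ3g : τ3.g = τ.g := rfl
    have hτ3si : τ3.s i = 0 := by simp [τ3]
    have herase : ∑ j ∈ Finset.univ.erase i,
          σ.q j * (-((N : ℝ) * (w j : ℝ)) * (σ.r j + (1 - σ.r j) * τ3.s j)) =
        ∑ j ∈ Finset.univ.erase i,
          σ.q j * (-((N : ℝ) * (w j : ℝ)) * (σ.r j + (1 - σ.r j) * τ.s j)) :=
      Finset.sum_congr rfl fun j hj => by
        simp [τ3, Function.update_of_ne (Finset.ne_of_mem_erase hj)]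
    rw [key τ3.s, key τ.s, hτ3g, hτ3si, herase] at hle
    have hP : 0 < τ.g 0 * (σ.q i * (((N : ℝ) * (w i : ℝ)) * ((1 - σ.r i) * τ.s i))) :=
      mul_pos hg00 (mul_pos hqi (mul_pos (hNw i)
        (mul_pos (sub_pos.mpr hri) hsi)))
    nlinarith [hle, hP]
  -- payoff quantities
  set B : Fin N → ℝ := fun k => ∑ i, σ.q i *
      (if i = k then (N : ℝ) * (M : ℝ) - (W : ℝ) - (M : ℝ) else -(W : ℝ) - (M : ℝ)) with hBdef
  set A : ℝ := ∑ j, σ.q j * (-((N : ℝ) * (w j : ℝ)) * (σ.r j + (1 - σ.r j) * τ.s j)) with hAdef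
  set A' : ℝ := ∑ j, σ.q j *
      (-((N : ℝ) * (w j : ℝ)) * (if σ.r j = 1 then (1 : ℝ) else 0)) with hA'def
  have hAA' : A ≤ A' := by
    refine Finset.sum_le_sum fun i _ => ?_
    rcases eq_or_ne (σ.r i) 1 with h | h
    · exact le_of_eq (by rw [if_pos h, h]; ring)
    · simp only [if_neg h]
      have h1 : σ.q i * τ.s i = 0 := hs0 i h
      have h2 : σ.q i * τ.s i * ((N : ℝ) * (w i : ℝ)) = 0 := by rw [h1, zero_mul]
      have h3 : σ.q i * τ.s i * ((N : ℝ) * (w i : ℝ)) * σ.r i = 0 := by rw [h1]; ring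
      have h4 : 0 ≤ σ.q i * ((N : ℝ) * (w i : ℝ)) * σ.r i :=
        mul_nonneg (mul_nonneg (hq0 i) (hNw i).le) (hrb i).1
      nlinarith [h2, h3, h4]
  -- Step B: A dominates every B k
  have hsum_g : τ.g 0 + ∑ k : Fin N, τ.g k.succ = 1 := by
    rw [← hg1, Fin.sum_univ_succ]
  obtain ⟨k0, -, hk0⟩ := Finset.exists_max_image Finset.univ B
    ⟨⟨0, hN⟩, Finset.mem_univ _⟩
  have hBA : ∀ k, B k ≤ A := by
    have hτ4 : FValid ⟨fun k => if k = k0.succ then (1 : ℝ) else 0, τ.s⟩ := by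
      refine ⟨fun k => by dsimp; split <;> norm_num, by simp, hsb⟩
    have hle4 := hτBR _ hτ4
    rw [EU2_eq, EU2_eq] at hle4
    have hg04 : (if (0 : Fin (N + 1)) = k0.succ then (1 : ℝ) else 0) = 0 := by
      rw [if_neg (Fin.succ_ne_zero k0).symm]
    simp only [hg04, zero_mul, zero_add] at hle4
    have hsum4 : ∑ k : Fin N, (if k.succ = k0.succ then (1 : ℝ) else 0) * B k = B k0 := by
      have : ∀ k : Fin N, (if k.succ = k0.succ then (1 : ℝ) else 0) * B k =
          if k = k0 then B k else 0 := by
        intro k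
        by_cases hk : k = k0
        · simp [hk]
        · rw [if_neg (fun h => hk (Fin.succ_injective _ h)), if_neg hk, zero_mul]
      rw [Finset.sum_congr rfl fun k _ => this k, Finset.sum_ite_eq' Finset.univ k0,
        if_pos (Finset.mem_univ k0)]
    rw [hsum4] at hle4
    -- hle4 : B k0 ≤ τ.g 0 * A + ∑ k, τ.g k.succ * B k
    have htail : ∑ k : Fin N, τ.g k.succ * B k ≤ (∑ k : Fin N, τ.g k.succ) * B k0 := by
      rw [Finset.sum_mul]
      exact Finset.sum_le_sum fun k _ =>
        mul_le_mul_of_nonneg_left (hk0 k (Finset.mem_univ k)) (hg0 k.succ)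
    have hk0A : B k0 ≤ A := by
      have h6 : (∑ k : Fin N, τ.g k.succ) = 1 - τ.g 0 := by linarith
      rw [h6] at htail
      have h5 : τ.g 0 * B k0 ≤ τ.g 0 * A := by nlinarith [hle4, htail]
      exact le_of_mul_le_mul_left h5 hg00
    exact fun k => le_trans (hk0 k (Finset.mem_univ k)) hk0A
  have hBA' : ∀ k, B k ≤ A' := fun k => le_trans (hBA k) hAA'
  -- the follower strategy τ' against σ'
  set τ' : FStrat N := ⟨fun k => if k = 0 then 1 else 0,
    fun i => if σ.r i = 1 then τ.s i else 0⟩ with hτ'def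
  have hτ'v : FValid τ' := by
    refine ⟨fun k => by dsimp [τ']; split <;> norm_num, by simp [τ'], fun i => ?_⟩
    dsimp [τ']
    split
    · exact hsb i
    · norm_num
  have hEU2τ' : EU2 N w W M σ' τ' = A' := by
    rw [EU2_eq]
    have h0 : τ'.g 0 = 1 := by simp [τ']
    have hk : ∀ k : Fin N, τ'.g k.succ = 0 := fun k => by
      simp [τ', Fin.succ_ne_zero k]
    have hz : ∑ k : Fin N, τ'.g k.succ * (∑ i, σ'.q i *
        (if i = k then (N : ℝ) * (M : ℝ) - (W : ℝ) - (M : ℝ) else -(W : ℝ) - (M : ℝ))) = 0 :=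
      Finset.sum_eq_zero fun k _ => by rw [hk k, zero_mul]
    rw [h0, one_mul, hz, add_zero, hA'def, hσ'q]
    refine Finset.sum_congr rfl fun i _ => ?_
    rcases eq_or_ne (σ.r i) 1 with h | h
    · have : σ'.r i = 1 := by rw [hσ'r, if_pos h]
      have h2 : τ'.s i = τ.s i := by simp [τ', h]
      rw [this, h2, if_pos h]; ring
    · have : σ'.r i = 0 := by rw [hσ'r, if_neg h]
      have h2 : τ'.s i = 0 := by simp [τ', h]
      rw [this, h2, if_neg h]; ring
  have hτ'BR : BestResponse N w W M σ' τ' := by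
    refine ⟨hτ'v, fun τ'' hτ''v => ?_⟩
    obtain ⟨h0, h1, h2⟩ := hτ''v
    rw [EU2_eq, hEU2τ', hσ'q]
    have hinner : ∑ i, σ.q i * (-((N : ℝ) * (w i : ℝ)) * (σ'.r i + (1 - σ'.r i) * τ''.s i))
        ≤ A' := by
      refine Finset.sum_le_sum fun i _ => ?_
      rcases eq_or_ne (σ.r i) 1 with h | h
      · have hri : σ'.r i = 1 := by rw [hσ'r, if_pos h]
        exact le_of_eq (by rw [hri, if_pos h]; ring)
      · have hri : σ'.r i = 0 := by rw [hσ'r, if_neg h]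
        rw [hri, if_neg h]
        have : σ.q i * (-((N : ℝ) * (w i : ℝ)) * ((0 : ℝ) + (1 - 0) * τ''.s i)) =
            -(σ.q i * (((N : ℝ) * (w i : ℝ)) * τ''.s i)) := by ring
        rw [this]
        have hnn : 0 ≤ σ.q i * (((N : ℝ) * (w i : ℝ)) * τ''.s i) :=
          mul_nonneg (hq0 i) (mul_nonneg (hNw i).le (h2 i).1)
        nlinarith [hnn]
    have hsum_g'' : τ''.g 0 + ∑ k : Fin N, τ''.g k.succ = 1 := by
      rw [← h1, Fin.sum_univ_succ]
    have htail : ∑ k : Fin N, τ''.g k.succ * B k ≤ (∑ k : Fin N, τ''.g k.succ) * A' := by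
      rw [Finset.sum_mul]
      exact Finset.sum_le_sum fun k _ =>
        mul_le_mul_of_nonneg_left (hBA' k) (h0 k.succ)
    have hfirst : τ''.g 0 * (∑ i, σ.q i *
        (-((N : ℝ) * (w i : ℝ)) * (σ'.r i + (1 - σ'.r i) * τ''.s i))) ≤ τ''.g 0 * A' :=
      mul_le_mul_of_nonneg_left hinner (h0 0)
    calc _ ≤ τ''.g 0 * A' + (∑ k : Fin N, τ''.g k.succ) * A' := by
          exact add_le_add hfirst htail
      _ = (τ''.g 0 + ∑ k : Fin N, τ''.g k.succ) * A' := by ring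
      _ = A' := by rw [hsum_g'']; ring
  -- compare the leader payoffs
  have hE : ∑ i, σ.q i * (τ'.s i * ((N : ℝ) * (v i : ℝ))) =
      ∑ i, σ.q i * (τ.s i * ((N : ℝ) * (v i : ℝ))) := by
    refine Finset.sum_congr rfl fun i _ => ?_
    rcases eq_or_ne (σ.r i) 1 with h | h
    · simp [τ', h]
    · have h1 : σ.q i * τ.s i = 0 := hs0 i h
      have h2 : τ'.s i = 0 := by simp [τ', h]
      rw [h2]
      calc σ.q i * ((0 : ℝ) * ((N : ℝ) * (v i : ℝ))) = 0 := by ring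
        _ = σ.q i * τ.s i * ((N : ℝ) * (v i : ℝ)) := by rw [h1, zero_mul]
        _ = σ.q i * (τ.s i * ((N : ℝ) * (v i : ℝ))) := by ring
  have hEnn : 0 ≤ ∑ i, σ.q i * (τ.s i * ((N : ℝ) * (v i : ℝ))) :=
    Finset.sum_nonneg fun i _ => mul_nonneg (hq0 i)
      (mul_nonneg (hsb i).1 (by positivity))
  have hg0le1 : τ.g 0 ≤ 1 := by
    have : 0 ≤ ∑ k : Fin N, τ.g k.succ :=
      Finset.sum_nonneg fun k _ => hg0 k.succ
    linarith
  have hEU1τ' : EU1 N v σ' τ' = ∑ i, σ.q i * (τ.s i * ((N : ℝ) * (v i : ℝ))) := by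
    rw [EU1_eq, hσ'q, hE]
    have h0 : τ'.g 0 = 1 := by simp [τ']
    rw [h0, one_mul]
  have hxle : x ≤ EU1 N v σ' τ' := by
    rw [hxeq, EU1_eq, hEU1τ']
    nlinarith [hEnn, hg0le1, hg00]
  exact le_trans hxle (hx'.2 ⟨τ', hτ'BR, rfl⟩)

end KnapsackGame
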